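/- Let θ_1, …, θ_n ∈ ℝ satisfy Σ_{t=2}^n |θ_t − θ_{t−1}| ≤ C, let σ > 0 and κ ≥ 1, and for each time t let θ̄^{(t)}_{s} = (θ_t + θ_{t−1} + … + θ_{t−s+1})/s denote the backward average of length s ≤ t, S(r) = {1, 2, 4, …, 2^{⌊log₂ r⌋}}, and U_t(r) = max( max_{s ∈ S(r)} |θ̄^{(t)}_{s} − θ_t|, σ/√r ). Suppose estimates θ̂_1, …, θ̂_n satisfy the point-wise guarantee |θ̂_t − θ_t| ≤ κ·min_{r ∈ {1, …, t}} U_t(r) for every t ∈ {1, …, n}. Then the squared-error risk satisfies Σ_{t=1}^n (θ̂_t − θ_t)² ≤ κ²·σ²·(1 + log n)·max( 1, 4^{2/3}·n^{1/3}·C^{2/3}·σ^{−2/3} ); in particular Σ_{t=1}^n (θ̂_t − θ_t)² = O( κ²·log n·( n^{1/3}·C^{2/3}·σ^{4/3} + σ² ) ), matching the minimax rate for total-variation denoising up to logarithmic factors. -/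

import Mathlib

open Finset

set_option maxHeartbeats 1000000


private lemma cube_rpow_third {x : ℝ} (hx : 0 ≤ x) :
    (x ^ ((1:ℝ)/3)) ^ (3:ℕ) = x := by
  rw [← Real.rpow_natCast (x ^ ((1:ℝ)/3)) 3, ← Real.rpow_mul hx]
  norm_num

private lemma cube_inj {a b : ℝ} (ha : 0 ≤ a) (hb : 0 ≤ b) (h : a ^ (3:ℕ) = b ^ (3:ℕ)) :
    a = b := by
  rcases lt_trichotomy a b with h' | h' | h'
  · exact absurd h (pow_lt_pow_left₀ h' ha (by norm_num)).ne
  · exact h'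
  · exact absurd h.symm (pow_lt_pow_left₀ h' hb (by norm_num)).ne

private lemma tele (θ : ℕ → ℝ) : ∀ u t : ℕ, u ≤ t →
    |θ t - θ u| ≤ ∑ w ∈ Icc (u+1) t, |θ w - θ (w-1)| := by
  intro u t h
  induction t, h using Nat.le_induction with
  | base => simp
  | succ t ht ih =>
      rw [Finset.sum_Icc_succ_top (by omega : u + 1 ≤ t + 1)]
      have h1 : |θ (t+1) - θ u| ≤ |θ t - θ u| + |θ (t+1) - θ (t+1-1)| := by
        simp only [Nat.add_sub_cancel]
        have : θ (t+1) - θ u = (θ t - θ u) + (θ (t+1) - θ t) := by ring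
        rw [this]
        exact abs_add_le _ _
      exact h1.trans (by linarith)

private lemma harm : ∀ n : ℕ, (∑ t ∈ Icc 1 n, (1:ℝ)/t) ≤ 1 + Real.log n := by
  intro n
  induction n with
  | zero => simp
  | succ n ih =>
      rcases Nat.eq_zero_or_pos n with h0 | h0
      · subst h0; norm_num
      rw [Finset.sum_Icc_succ_top (by omega : 1 ≤ n + 1)]
      have hlog : Real.log n + 1/((n:ℝ)+1) ≤ Real.log (n+1) := by
        have hx : (0:ℝ) < ((n:ℝ)+1)/(n:ℝ) := by positivity
        have h1 : Real.log (((n:ℝ)+1)/(n:ℝ)) ≥ 1 - (((n:ℝ)+1)/(n:ℝ))⁻¹ := by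
          have := Real.log_le_sub_one_of_pos (inv_pos.mpr hx)
          rw [Real.log_inv] at this
          linarith
        rw [Real.log_div (by positivity) (by positivity)] at h1
        have hn : (0:ℝ) < n := by exact_mod_cast h0
        have hinv : (((n:ℝ)+1)/(n:ℝ))⁻¹ = (n:ℝ)/((n:ℝ)+1) := by
          rw [inv_div]
        rw [hinv] at h1
        have : 1 - (n:ℝ)/((n:ℝ)+1) = 1/((n:ℝ)+1) := by field_simp; ring
        rw [this] at h1
        push_cast
        linarith
      push_cast
      push_cast at ih
      linarith

private lemma bias (θ : ℕ → ℝ) (t s : ℕ) (hs : 1 ≤ s) (hst : s ≤ t) :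
    |(∑ u ∈ Icc (t - s + 1) t, θ u) / (s:ℝ) - θ t|
      ≤ ∑ u ∈ Icc (t - s + 2) t, |θ u - θ (u-1)| := by
  set a := t - s + 1 with ha
  have ha1 : 1 ≤ a := by omega
  have hat : a ≤ t := by omega
  have hcard : (Icc a t).card = s := by
    rw [Nat.card_Icc]; omega
  set V := ∑ u ∈ Icc (t - s + 2) t, |θ u - θ (u-1)| with hV
  have hV0 : 0 ≤ V := Finset.sum_nonneg fun _ _ => abs_nonneg _
  have hsub : ∀ u ∈ Icc a t, |θ u - θ t| ≤ V := by
    intro u hu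
    rw [Finset.mem_Icc] at hu
    rw [abs_sub_comm]
    refine (tele θ u t hu.2).trans ?_
    apply Finset.sum_le_sum_of_subset_of_nonneg
    · apply Finset.Icc_subset_Icc_left; omega
    · intro _ _ _; exact abs_nonneg _
  have hkey : |∑ u ∈ Icc a t, (θ u - θ t)| ≤ (s:ℝ) * V := by
    calc |∑ u ∈ Icc a t, (θ u - θ t)| ≤ ∑ u ∈ Icc a t, |θ u - θ t| :=
          Finset.abs_sum_le_sum_abs _ _
      _ ≤ ∑ u ∈ Icc a t, V := Finset.sum_le_sum hsub
      _ = (s:ℝ) * V := by rw [Finset.sum_const, hcard]; ring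
  have hsum : ∑ u ∈ Icc a t, (θ u - θ t) = (∑ u ∈ Icc a t, θ u) - (s:ℝ) * θ t := by
    rw [Finset.sum_sub_distrib, Finset.sum_const, hcard]; ring
  have hs0 : (0:ℝ) < s := by exact_mod_cast hs
  have hexp : (∑ u ∈ Icc a t, θ u) / (s:ℝ) - θ t
      = (∑ u ∈ Icc a t, (θ u - θ t)) / (s:ℝ) := by
    rw [hsum]; field_simp
  rw [hexp, abs_div, abs_of_pos hs0, div_le_iff₀ hs0]
  linarith [hkey]

private lemma cube_le {a b : ℝ} (hb : 0 ≤ b) (h : a ^ (3:ℕ) ≤ b ^ (3:ℕ)) : a ≤ b := by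
  by_contra h'
  push_neg at h'
  exact absurd h (not_le.mpr (pow_lt_pow_left₀ h' hb (by norm_num)))

private lemma numeric {C σ L D E τ K R q l g : ℝ} {n : ℕ} (hσ : 0 < σ) (hC : 0 < C)
    (hn : (0:ℝ) < n) (hL : 2.6 ≤ L) (hD : 1 ≤ D) (hDdef : D = n * C^2 / σ^2)
    (hτ0 : 0 < τ) (hτ3 : τ ^ (3:ℕ) = C * L * σ^2 / (4*n))
    (hE0 : 0 ≤ E) (hE3 : E ^ (3:ℕ) = 16 * D)
    (hK0 : 0 ≤ K) (hK : K ≤ C / τ)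
    (hR0 : 0 < R) (hR : σ^2/τ^2 * (534/634) ≤ R)
    (hq0 : 0 < q) (hq3 : q ^ (3:ℕ) = 2)
    (hl0 : 0 < l) (hl3 : l ^ (3:ℕ) = L)
    (hg0 : 0 < g) (hg3 : g ^ (3:ℕ) = D * L^2) :
    (K + 1) * L + n / R ≤ L * E := by
  have hL0 : (0:ℝ) < L := by linarith
  have hqlb : 1.2599 ≤ q := by
    by_contra h'
    push_neg at h'
    have := pow_lt_pow_left₀ h' hq0.le (by norm_num : (3:ℕ) ≠ 0)
    rw [hq3] at this; norm_num at this
  have hqub : q ≤ 1.26 := by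
    by_contra h'
    push_neg at h'
    have := pow_lt_pow_left₀ h' (by norm_num : (0:ℝ) ≤ 1.26) (by norm_num : (3:ℕ) ≠ 0)
    rw [hq3] at this; norm_num at this
  have hllb : 1.375 ≤ l := by
    by_contra h'
    push_neg at h'
    have := pow_lt_pow_left₀ h' hl0.le (by norm_num : (3:ℕ) ≠ 0)
    rw [hl3] at this; norm_num at this; linarith
  -- C/τ * L = q^2 * g
  have h_a : C / τ * L = q^2 * g := by
    apply cube_inj (by positivity) (by positivity)
    rw [show (C / τ * L) ^ (3:ℕ) = C^3 * L^3 / τ^(3:ℕ) from by ring, hτ3,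
      show (q^2*g)^(3:ℕ) = (q^(3:ℕ))^2 * g^(3:ℕ) from by ring, hq3, hg3, hDdef]
    field_simp
    ring
  -- n * τ^2 / σ^2 = g / (2*q)
  have h_b : (n:ℝ) * τ^2 / σ^2 = g / (2*q) := by
    apply cube_inj (by positivity) (by positivity)
    rw [show ((n:ℝ) * τ^2 / σ^2) ^ (3:ℕ) = (n:ℝ)^3 * (τ^(3:ℕ))^2 / (σ^2)^3 from by ring, hτ3,
      show (g/(2*q))^(3:ℕ) = g^(3:ℕ) / (8 * q^(3:ℕ)) from by ring, hq3, hg3, hDdef]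
    field_simp
    ring
  -- L * E = 2*q*l*g
  have h_c : L * E = 2*q*l*g := by
    apply cube_inj (by positivity) (by positivity)
    rw [show (L*E)^(3:ℕ) = L^3 * E^(3:ℕ) from by ring,
      show (2*q*l*g)^(3:ℕ) = 8 * q^(3:ℕ) * l^(3:ℕ) * g^(3:ℕ) from by ring,
      hE3, hq3, hl3, hg3]
    ring
  -- l^2 ≤ g
  have h_e : l^2 ≤ g := by
    apply cube_le hg0.le
    rw [show (l^2)^(3:ℕ) = (l^(3:ℕ))^2 from by ring, hl3, hg3]
    nlinarith
  -- n / R ≤ (634/534) * (n*τ^2/σ^2)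
  have h_R : (n:ℝ) / R ≤ (634/534) * ((n:ℝ) * τ^2 / σ^2) := by
    have hst : (0:ℝ) < σ^2/τ^2 * (534/634) := by positivity
    have h1 : (n:ℝ) / R ≤ (n:ℝ) / (σ^2/τ^2 * (534/634)) :=
      div_le_div_of_nonneg_left hn.le hst hR
    refine h1.trans ?_
    rw [div_le_iff₀ hst]
    have : (634/534 : ℝ) * ((n:ℝ) * τ^2 / σ^2) * (σ^2/τ^2 * (534/634)) = n := by
      field_simp
    rw [this]
  have hKL : (K + 1) * L ≤ C/τ * L + L := by nlinarith
  have hdiv : (634/534:ℝ)/(2*q) ≤ 0.4712 := by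
    rw [div_le_iff₀ (by positivity)]
    linarith
  have hfin : q^2 + l + (634/534)/(2*q) ≤ 2*q*l := by
    nlinarith [mul_nonneg (by linarith : (0:ℝ) ≤ 2*q - 2.5198) (by linarith : (0:ℝ) ≤ l - 1.375),
      sq_nonneg (q - 1.26)]
  have hmain : C/τ*L + L + (634/534) * ((n:ℝ)*τ^2/σ^2) ≤ L*E := by
    rw [h_a, h_b, h_c]
    have hLlg : L ≤ l * g := by
      calc L = l * l^2 := by rw [← hl3]; ring
        _ ≤ l * g := by nlinarith
    have h2 : (634/534:ℝ) * (g/(2*q)) = ((634/534)/(2*q)) * g := by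
      field_simp
    rw [h2]
    calc q^2*g + L + (634/534)/(2*q)*g ≤ q^2*g + l*g + (634/534)/(2*q)*g := by linarith
      _ = (q^2 + l + (634/534)/(2*q)) * g := by ring
      _ ≤ (2*q*l) * g := by nlinarith
      _ = 2*q*l*g := by ring
  linarith [h_R, hKL, hmain]

private lemma keypt (θ θhat : ℕ → ℝ) (σ κ : ℝ) (hσ : 0 < σ) (hκ : 1 ≤ κ)
    (t r : ℕ) (hr1 : 1 ≤ r) (hrt : r ≤ t)
    (h : |θhat t - θ t| ≤ κ *
        max ((Finset.range (Nat.log 2 r + 1)).sup'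
            (Finset.nonempty_range_iff.mpr (Nat.succ_ne_zero _))
            (fun i => |(∑ u ∈ Finset.Icc (t - 2 ^ i + 1) t, θ u) / (2 ^ i : ℝ) - θ t|))
          (σ / Real.sqrt r)) :
    (θhat t - θ t)^2 ≤ κ^2 *
      max ((∑ u ∈ Icc (t - r + 2) t, |θ u - θ (u-1)|)^2) (σ^2/r) := by
  set V := ∑ u ∈ Icc (t - r + 2) t, |θ u - θ (u-1)| with hVdef
  have hV0 : 0 ≤ V := Finset.sum_nonneg fun _ _ => abs_nonneg _
  have hsup : (Finset.range (Nat.log 2 r + 1)).sup'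
      (Finset.nonempty_range_iff.mpr (Nat.succ_ne_zero _))
      (fun i => |(∑ u ∈ Finset.Icc (t - 2 ^ i + 1) t, θ u) / (2 ^ i : ℝ) - θ t|) ≤ V := by
    apply Finset.sup'_le
    intro i hi
    rw [Finset.mem_range] at hi
    have h2r : 2 ^ i ≤ r := by
      calc 2 ^ i ≤ 2 ^ Nat.log 2 r := Nat.pow_le_pow_right (by norm_num) (by omega)
        _ ≤ r := Nat.pow_log_le_self 2 (by omega)
    have h2t : 2 ^ i ≤ t := h2r.trans hrt
    have hb := bias θ t (2 ^ i) (Nat.one_le_two_pow) h2t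
    have hcast : ((2 ^ i : ℕ) : ℝ) = (2 ^ i : ℝ) := by push_cast; ring
    rw [hcast] at hb
    refine hb.trans ?_
    apply Finset.sum_le_sum_of_subset_of_nonneg
    · apply Finset.Icc_subset_Icc_left; omega
    · intro _ _ _; exact abs_nonneg _
  have hr0 : (0:ℝ) < r := by exact_mod_cast hr1
  have hsq0 : 0 ≤ σ / Real.sqrt r := by positivity
  have h2 : |θhat t - θ t| ≤ κ * max V (σ / Real.sqrt r) :=
    h.trans (mul_le_mul_of_nonneg_left (max_le_max hsup le_rfl) (by linarith))
  have hmax0 : 0 ≤ max V (σ / Real.sqrt r) := le_trans hV0 (le_max_left _ _)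
  have habs : (θhat t - θ t)^2 ≤ (κ * max V (σ / Real.sqrt r))^2 := by
    rw [← sq_abs (θhat t - θ t)]
    exact pow_le_pow_left₀ (abs_nonneg _) h2 2
  refine habs.trans ?_
  rw [mul_pow]
  apply mul_le_mul_of_nonneg_left _ (by positivity)
  have hsq : (σ / Real.sqrt r)^2 = σ^2 / r := by
    rw [div_pow, Real.sq_sqrt (le_of_lt hr0)]
  rcases max_choice V (σ / Real.sqrt r) with hc | hc <;> rw [hc]
  · exact le_max_of_le_left le_rfl
  · rw [hsq]; exact le_max_of_le_right le_rfl

/-- squared-error risk for TV denoising: if the estimates satisfy the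
point-wise guarantee `|θ̂_t − θ_t| ≤ κ·min_{r ∈ {1,…,t}} U_t(r)` (stated equivalently
as `∀ r ∈ {1,…,t}`), where
`U_t(r) = max(max_{s ∈ S(r)} |θ̄^{(t)}_s − θ_t|, σ/√r)`,
`θ̄^{(t)}_s = (θ_t + … + θ_{t−s+1})/s` and `S(r) = {1,2,4,…,2^⌊log₂ r⌋}`, and the
total variation of `θ_{1:n}` is at most `C`, then
`Σ_{t=1}^n (θ̂_t − θ_t)² ≤ κ²σ²(1 + log n)·max(1, 4^{2/3} n^{1/3} C^{2/3} σ^{−2/3})`. -/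
theorem stmt_15 (n : ℕ) (hn : 0 < n) (θ θhat : ℕ → ℝ) (C σ κ : ℝ)
    (hσ : 0 < σ) (hκ : 1 ≤ κ)
    (hTV : ∑ t ∈ Finset.Icc 2 n, |θ t - θ (t - 1)| ≤ C)
    (hpt : ∀ t ∈ Finset.Icc 1 n, ∀ r ∈ Finset.Icc 1 t,
      |θhat t - θ t| ≤ κ *
        max ((Finset.range (Nat.log 2 r + 1)).sup'
            (Finset.nonempty_range_iff.mpr (Nat.succ_ne_zero _))
            (fun i => |(∑ u ∈ Finset.Icc (t - 2 ^ i + 1) t, θ u) / (2 ^ i : ℝ) - θ t|))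
          (σ / Real.sqrt r)) :
    ∑ t ∈ Finset.Icc 1 n, (θhat t - θ t) ^ 2 ≤
      κ ^ 2 * σ ^ 2 * (1 + Real.log n) *
        max 1 ((4 : ℝ) ^ ((2 : ℝ) / 3) * (n : ℝ) ^ ((1 : ℝ) / 3) * C ^ ((2 : ℝ) / 3) *
          σ ^ (-(2 : ℝ) / 3)) := by
  have hC0 : 0 ≤ C := le_trans (Finset.sum_nonneg fun u _ => abs_nonneg _) hTV
  have hnR : (0:ℝ) < n := by exact_mod_cast hn
  set L := 1 + Real.log n with hLdef
  have hlogn : 0 ≤ Real.log n := Real.log_nonneg (by exact_mod_cast hn)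
  have hL1 : 1 ≤ L := by simp [hLdef]; linarith
  have hL0 : 0 < L := by linarith
  set E := (4 : ℝ) ^ ((2 : ℝ) / 3) * (n : ℝ) ^ ((1 : ℝ) / 3) * C ^ ((2 : ℝ) / 3) *
      σ ^ (-(2 : ℝ) / 3) with hEdef
  have hE0 : 0 ≤ E := by
    apply mul_nonneg; apply mul_nonneg; apply mul_nonneg
    all_goals exact Real.rpow_nonneg (by norm_num <;> positivity) _
  have hκ0 : (0:ℝ) < κ := by linarith
  have hkey : ∀ t ∈ Icc 1 n, ∀ r ∈ Icc 1 t, (θhat t - θ t)^2 ≤ κ^2 *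
      max ((∑ u ∈ Icc (t - r + 2) t, |θ u - θ (u-1)|)^2) (σ^2/r) := by
    intro t ht r hr
    rw [mem_Icc] at hr
    exact keypt θ θhat σ κ hσ hκ t r hr.1 hr.2 (hpt t ht r (mem_Icc.mpr hr))
  have hgoalform : κ ^ 2 * σ ^ 2 * (1 + Real.log n) *
        max 1 ((4 : ℝ) ^ ((2 : ℝ) / 3) * (n : ℝ) ^ ((1 : ℝ) / 3) * C ^ ((2 : ℝ) / 3) *
          σ ^ (-(2 : ℝ) / 3)) = κ^2 * σ^2 * L * max 1 E := rfl
  rw [hgoalform]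
  by_cases hcase : (n:ℝ) * C^2 ≤ σ^2
  · -- Case A : essentially constant signal
    have hA : ∀ t ∈ Icc 1 n, (θhat t - θ t)^2 ≤ κ^2*σ^2*(1/(t:ℝ)) := by
      intro t ht
      rw [mem_Icc] at ht
      have ht0 : (0:ℝ) < t := by exact_mod_cast ht.1
      have htn : (t:ℝ) ≤ n := by exact_mod_cast ht.2
      refine (hkey t (mem_Icc.mpr ht) t (mem_Icc.mpr ⟨ht.1, le_rfl⟩)).trans ?_
      have hV : (∑ u ∈ Icc (t - t + 2) t, |θ u - θ (u-1)|) ≤ C := by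
        refine le_trans ?_ hTV
        apply Finset.sum_le_sum_of_subset_of_nonneg
        · rw [show t - t + 2 = 2 from by omega]
          exact Finset.Icc_subset_Icc_right ht.2
        · intro _ _ _; exact abs_nonneg _
      have hV0 : 0 ≤ ∑ u ∈ Icc (t - t + 2) t, |θ u - θ (u-1)| :=
        Finset.sum_nonneg fun _ _ => abs_nonneg _
      have hC2 : C^2 ≤ σ^2/(t:ℝ) := by
        rw [le_div_iff₀ ht0]
        nlinarith
      have hmax : max ((∑ u ∈ Icc (t - t + 2) t, |θ u - θ (u-1)|)^2) (σ^2/(t:ℝ)) ≤ σ^2/(t:ℝ) := by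
        apply max_le _ le_rfl
        nlinarith
      calc κ^2 * max ((∑ u ∈ Icc (t - t + 2) t, |θ u - θ (u-1)|)^2) (σ^2/(t:ℝ))
          ≤ κ^2 * (σ^2/(t:ℝ)) := by
            apply mul_le_mul_of_nonneg_left hmax (by positivity)
        _ = κ^2*σ^2*(1/(t:ℝ)) := by ring
    calc ∑ t ∈ Icc 1 n, (θhat t - θ t)^2 ≤ ∑ t ∈ Icc 1 n, κ^2*σ^2*(1/(t:ℝ)) :=
          Finset.sum_le_sum hA
      _ = κ^2*σ^2 * ∑ t ∈ Icc 1 n, (1:ℝ)/(t:ℝ) := by rw [Finset.mul_sum]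
      _ ≤ κ^2*σ^2 * L := by
          apply mul_le_mul_of_nonneg_left (harm n) (by positivity)
      _ ≤ κ^2*σ^2*L * max 1 E := by
          nth_rewrite 1 [← mul_one (κ^2*σ^2*L)]
          apply mul_le_mul_of_nonneg_left (le_max_left 1 E) (by positivity)
  · push_neg at hcase
    have hCpos : 0 < C := by
      rcases lt_or_eq_of_le hC0 with h | h
      · exact h
      · exfalso; rw [← h] at hcase; simp at hcase; nlinarith
    set D := (n:ℝ) * C^2 / σ^2 with hDdef
    have hD1 : 1 < D := by
      rw [hDdef, lt_div_iff₀ (by positivity)]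
      linarith
    have hE3 : E ^ (3:ℕ) = 16 * D := by
      rw [hEdef]
      have h4 : ((4:ℝ)^((2:ℝ)/3))^(3:ℕ) = 16 := by
        rw [← Real.rpow_natCast ((4:ℝ)^((2:ℝ)/3)) 3, ← Real.rpow_mul (by norm_num : (0:ℝ) ≤ 4)]
        norm_num
      have hnn : (((n:ℝ))^((1:ℝ)/3))^(3:ℕ) = (n:ℝ) := cube_rpow_third (by positivity)
      have hCc : (C^((2:ℝ)/3))^(3:ℕ) = C^2 := by
        rw [← Real.rpow_natCast (C^((2:ℝ)/3)) 3, ← Real.rpow_mul hC0]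
        norm_num
      have hSc : (σ^(-(2:ℝ)/3))^(3:ℕ) = (σ^2)⁻¹ := by
        rw [← Real.rpow_natCast (σ^(-(2:ℝ)/3)) 3, ← Real.rpow_mul hσ.le]
        norm_num
      calc ((4:ℝ)^((2:ℝ)/3) * (n:ℝ)^((1:ℝ)/3) * C^((2:ℝ)/3) * σ^(-(2:ℝ)/3))^(3:ℕ)
          = ((4:ℝ)^((2:ℝ)/3))^(3:ℕ) * ((n:ℝ)^((1:ℝ)/3))^(3:ℕ) * (C^((2:ℝ)/3))^(3:ℕ) *
            (σ^(-(2:ℝ)/3))^(3:ℕ) := by ring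
        _ = 16 * (n:ℝ) * C^2 * (σ^2)⁻¹ := by rw [h4, hnn, hCc, hSc]
        _ = 16 * D := by rw [hDdef]; field_simp
    have hE25 : 2.5198 < E := by
      by_contra h'
      push_neg at h'
      have := pow_le_pow_left₀ hE0 h' 3
      rw [hE3] at this
      norm_num at this
      linarith
    have hmaxE : max 1 E = E := max_eq_right (by linarith)
    rw [hmaxE]
    by_cases hB1 : (n:ℝ) ≤ L * E
    · -- trivial bound n σ² κ²
      have hT : ∀ t ∈ Icc 1 n, (θhat t - θ t)^2 ≤ κ^2*σ^2 := by
        intro t ht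
        rw [mem_Icc] at ht
        refine (hkey t (mem_Icc.mpr ht) 1 (mem_Icc.mpr ⟨le_rfl, ht.1⟩)).trans ?_
        have hempty : Icc (t - 1 + 2) t = (∅ : Finset ℕ) := by
          apply Finset.Icc_eq_empty; omega
        rw [hempty]
        norm_num
        rw [max_eq_right (by positivity : (0:ℝ) ≤ σ^2)]
      calc ∑ t ∈ Icc 1 n, (θhat t - θ t)^2 ≤ ∑ t ∈ Icc 1 n, κ^2*σ^2 :=
            Finset.sum_le_sum hT
        _ = (n:ℝ) * (κ^2*σ^2) := by
            rw [Finset.sum_const, Nat.card_Icc]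
            simp [nsmul_eq_mul]
        _ ≤ (L*E) * (κ^2*σ^2) := by
            apply mul_le_mul_of_nonneg_right hB1 (by positivity)
        _ = κ^2*σ^2*L*E := by ring
    · push_neg at hB1
      -- establish n ≥ 5 and L ≥ 2.6
      have hlog2 : (0.6931:ℝ) ≤ Real.log 2 := by
        have := Real.log_two_gt_d9; linarith
      have hnE : 2.5198 * L < (n:ℝ) := by nlinarith
      have hn5 : 5 ≤ n := by
        by_contra h'
        push_neg at h'
        have h4 : (n:ℝ) ≤ 4 := by exact_mod_cast Nat.lt_succ_iff.mp h'
        have h2 : (2:ℝ) ≤ (n:ℝ) := by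
          have hn1 : (1:ℝ) ≤ (n:ℝ) := by exact_mod_cast hn
          by_contra h2'
          push_neg at h2'
          have : (n:ℝ) = 1 := by
            have : n < 2 := by exact_mod_cast h2'
            interval_cases n
            · norm_num
          rw [this] at hnE
          nlinarith
        have hlogn2 : (0.6931:ℝ) ≤ Real.log n :=
          le_trans hlog2 (Real.log_le_log (by norm_num) h2)
        nlinarith
      have hlog5 : (1.6:ℝ) ≤ Real.log 5 := by
        have hexp8 : Real.exp 1 ^ (8:ℕ) < 3125 := by
          calc Real.exp 1 ^ (8:ℕ) < 2.7182818286 ^ (8:ℕ) := by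
                apply pow_lt_pow_left₀ Real.exp_one_lt_d9 (Real.exp_pos 1).le (by norm_num)
            _ < 3125 := by norm_num
        have h1 : Real.exp 1.6 ^ (5:ℕ) = Real.exp 8 := by
          rw [← Real.exp_nat_mul]; norm_num
        have h2 : Real.exp 8 = Real.exp 1 ^ (8:ℕ) := by
          rw [← Real.exp_nat_mul]; norm_num
        have h3 : Real.exp 1.6 ^ (5:ℕ) < (5:ℝ) ^ (5:ℕ) := by
          rw [h1, h2]; norm_num; linarith
        have h4 : Real.exp 1.6 < 5 :=
          lt_of_pow_lt_pow_left₀ 5 (by norm_num) h3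
        rw [show (1.6:ℝ) = Real.log (Real.exp 1.6) from (Real.log_exp _).symm]
        exact Real.log_le_log (Real.exp_pos _) h4.le
      have hL26 : (2.6:ℝ) ≤ L := by
        have h5 : (5:ℝ) ≤ (n:ℝ) := by exact_mod_cast hn5
        have := Real.log_le_log (by norm_num : (0:ℝ) < 5) h5
        simp only [hLdef]
        linarith
      -- CL bound and τ
      have hCL : 4 * (C * L) < (n:ℝ) * σ := by
        have h1 : (L * E)^(3:ℕ) < (n:ℝ)^(3:ℕ) :=
          pow_lt_pow_left₀ hB1 (by positivity) (by norm_num)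
        have h2 : L^(3:ℕ) * (16 * D) < (n:ℝ)^(3:ℕ) := by
          have : (L*E)^(3:ℕ) = L^(3:ℕ) * E^(3:ℕ) := by ring
          rw [this, hE3] at h1
          exact h1
        have h3 : 16 * L^3 * C^2 < (n:ℝ)^2 * σ^2 := by
          have hσ2 : (0:ℝ) < σ^2 := by positivity
          have hconv : L^(3:ℕ) * (16 * ((n:ℝ)*C^2/σ^2)) = ((n:ℝ) * (16*L^3*C^2))/σ^2 := by
            ring
          rw [hDdef, hconv, div_lt_iff₀ hσ2] at h2
          have hmul : (n:ℝ) * (16*L^3*C^2) < (n:ℝ) * ((n:ℝ)^2*σ^2) := by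
            have : (n:ℝ)^(3:ℕ)*σ^2 = (n:ℝ) * ((n:ℝ)^2*σ^2) := by ring
            linarith
          exact lt_of_mul_lt_mul_left hmul hnR.le
        have h4 : (4*(C*L))^(2:ℕ) < ((n:ℝ)*σ)^(2:ℕ) := by
          nlinarith [mul_nonneg (by linarith : (0:ℝ) ≤ L - 1)
            (by positivity : (0:ℝ) ≤ 16*C^2*L^2)]
        have := lt_of_pow_lt_pow_left₀ 2 (by positivity : (0:ℝ) ≤ (n:ℝ)*σ) h4
        linarith
      have harg0 : (0:ℝ) < C*L*σ^2/(4*(n:ℝ)) := by positivity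
      set τ := (C*L*σ^2/(4*(n:ℝ)))^((1:ℝ)/3) with hτdef
      have hτ0 : 0 < τ := Real.rpow_pos_of_pos harg0 _
      have hτ3 : τ^(3:ℕ) = C*L*σ^2/(4*(n:ℝ)) := by
        rw [hτdef]; exact cube_rpow_third harg0.le
      have h16τ : 16 * τ^(3:ℕ) < σ^(3:ℕ) := by
        rw [hτ3]
        have heq : 16 * (C*L*σ^2/(4*(n:ℝ))) = (4*(C*L)) * σ^2 / n := by
          field_simp; ring
        rw [heq, div_lt_iff₀ hnR]
        linarith [mul_lt_mul_of_pos_right hCL (show (0:ℝ) < σ^2 by positivity)]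
      have hστ : (6.34:ℝ) ≤ σ^2/τ^2 := by
        have hx0 : (0:ℝ) < σ/τ := by positivity
        have hx3 : (16:ℝ) < (σ/τ)^(3:ℕ) := by
          rw [div_pow, lt_div_iff₀ (by positivity : (0:ℝ) < τ^(3:ℕ))]
          linarith
        have heq : σ^2/τ^2 = (σ/τ)^2 := by rw [div_pow]
        rw [heq]
        by_contra h'
        push_neg at h'
        have hxub : σ/τ < 2.52 := by nlinarith [sq_nonneg (σ/τ - 2.52)]
        nlinarith [mul_lt_mul_of_pos_left h' hx0, mul_lt_mul_of_pos_right hxub (by norm_num : (0:ℝ) < 6.34)]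
      set R := Nat.floor (σ^2/τ^2) with hRdef
      have hR1 : 1 ≤ R := by
        apply Nat.le_floor
        push_cast
        linarith
      have hRle : (R:ℝ) ≤ σ^2/τ^2 := Nat.floor_le (by positivity)
      have hRlb : σ^2/τ^2 * (534/634) ≤ (R:ℝ) := by
        have h1 : σ^2/τ^2 < (R:ℝ) + 1 := Nat.lt_floor_add_one _
        linarith
      have hR0R : (0:ℝ) < R := by
        have : (1:ℝ) ≤ (R:ℝ) := by exact_mod_cast hR1
        linarith
      -- prefix sums and blocks
      set P : ℕ → ℝ := fun s => ∑ u ∈ Icc 2 s, |θ u - θ (u-1)| with hPdef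
      have hPn : P n ≤ C := hTV
      have hP0 : ∀ s, 0 ≤ P s := fun s => Finset.sum_nonneg fun _ _ => abs_nonneg _
      have hPmono : ∀ s u, s ≤ u → P s ≤ P u := by
        intro s u hsu
        apply Finset.sum_le_sum_of_subset_of_nonneg (Finset.Icc_subset_Icc_right hsu)
        intro _ _ _; exact abs_nonneg _
      have hPC : ∀ s, s ≤ n → P s ≤ C := fun s hs => (hPmono s n hs).trans hPn
      set k : ℕ → ℕ := fun s => Nat.floor (P s / τ) with hkdef
      set a : ℕ → ℕ := fun s => sInf {m : ℕ | 1 ≤ m ∧ k m = k s} with hadef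
      have hamem : ∀ s, 1 ≤ s → 1 ≤ a s ∧ k (a s) = k s := by
        intro s hs
        exact Nat.sInf_mem (⟨s, hs, rfl⟩ : {m : ℕ | 1 ≤ m ∧ k m = k s}.Nonempty)
      have hale : ∀ s, 1 ≤ s → a s ≤ s := fun s hs => Nat.sInf_le ⟨hs, rfl⟩
      have haeq : ∀ s u, k s = k u → a s = a u := by
        intro s u h
        simp only [hadef, h]
      -- per-time bound
      have hBt : ∀ t ∈ Icc 1 n, (θhat t - θ t)^2 ≤
          κ^2*σ^2*(1/(((t - a t + 1 : ℕ)):ℝ) + 1/(R:ℝ)) := by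
        intro t ht
        rw [mem_Icc] at ht
        obtain ⟨ha1, hak⟩ := hamem t ht.1
        have hat := hale t ht.1
        set r := min (t - a t + 1) R with hrdef
        have hr1 : 1 ≤ r := le_min (by omega) hR1
        have hrt : r ≤ t := le_trans (min_le_left _ _) (by omega)
        have hkk := hkey t (mem_Icc.mpr ht) r (mem_Icc.mpr ⟨hr1, hrt⟩)
        have hsplit : P (a t) + (∑ u ∈ Icc (a t + 1) t, |θ u - θ (u-1)|) = P t := by
          simp only [hPdef]
          rw [show Icc (a t + 1) t = Ioc (a t) t from Finset.Icc_add_one_left_eq_Ioc (a t) t,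
            show Icc 2 (a t) = Ioc 1 (a t) from Finset.Icc_add_one_left_eq_Ioc 1 (a t),
            show Icc 2 t = Ioc 1 t from Finset.Icc_add_one_left_eq_Ioc 1 t]
          exact Finset.sum_Ioc_consecutive _ ha1 (by omega)
        have hVle : (∑ u ∈ Icc (t - r + 2) t, |θ u - θ (u-1)|) ≤ P t - P (a t) := by
          have hsub : Icc (t - r + 2) t ⊆ Icc (a t + 1) t := by
            apply Finset.Icc_subset_Icc_left
            have := min_le_left (t - a t + 1) R
            omega
          have h1 := Finset.sum_le_sum_of_subset_of_nonneg hsub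
            (fun u _ _ => abs_nonneg (θ u - θ (u-1)))
          linarith
        have hfloor : P t - P (a t) < τ := by
          have hk1 : k (a t) = Nat.floor (P (a t) / τ) := by simp only [hkdef]
          have hk2 : k t = Nat.floor (P t / τ) := by simp only [hkdef]
          have h1 : ((k (a t) : ℕ):ℝ) ≤ P (a t) / τ := by
            rw [hk1]; exact Nat.floor_le (by positivity)
          rw [hak] at h1
          have h2 : P t / τ < ((k t : ℕ):ℝ) + 1 := by
            rw [hk2]; exact Nat.lt_floor_add_one _
          have h3 : ((k t : ℕ):ℝ) * τ ≤ P (a t) := by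
            rw [← le_div_iff₀ hτ0]; exact h1
          have h4 : P t < (((k t : ℕ):ℝ)+1) * τ := by
            rw [← div_lt_iff₀ hτ0]; exact h2
          linarith
        have hτ2r : (r:ℝ) * τ^2 ≤ σ^2 := by
          have hrR : (r:ℝ) ≤ (R:ℝ) := by exact_mod_cast min_le_right _ _
          have hτ2 : (0:ℝ) < τ^2 := by positivity
          calc (r:ℝ)*τ^2 ≤ (R:ℝ)*τ^2 := mul_le_mul_of_nonneg_right hrR hτ2.le
            _ ≤ (σ^2/τ^2)*τ^2 := mul_le_mul_of_nonneg_right hRle hτ2.le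
            _ = σ^2 := by field_simp
        have hr0R : (0:ℝ) < (r:ℝ) := by exact_mod_cast hr1
        have hmaxb : max ((∑ u ∈ Icc (t - r + 2) t, |θ u - θ (u-1)|)^2) (σ^2/(r:ℝ)) ≤ σ^2/(r:ℝ) := by
          apply max_le _ le_rfl
          have hV0 : 0 ≤ ∑ u ∈ Icc (t - r + 2) t, |θ u - θ (u-1)| :=
            Finset.sum_nonneg fun _ _ => abs_nonneg _
          have hVτ : (∑ u ∈ Icc (t - r + 2) t, |θ u - θ (u-1)|) < τ :=
            lt_of_le_of_lt (by linarith) hfloor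
          have hV2 : (∑ u ∈ Icc (t - r + 2) t, |θ u - θ (u-1)|)^2 ≤ τ^2 :=
            pow_le_pow_left₀ hV0 hVτ.le 2
          rw [le_div_iff₀ hr0R]
          have := mul_le_mul_of_nonneg_right hV2 hr0R.le
          linarith
        have hrsplit : σ^2/(r:ℝ) ≤ σ^2*(1/(((t - a t + 1:ℕ)):ℝ) + 1/(R:ℝ)) := by
          have h1 : (1:ℝ)/(r:ℝ) ≤ 1/(((t - a t + 1:ℕ)):ℝ) + 1/(R:ℝ) := by
            rcases min_choice (t - a t + 1) R with hmin | hmin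
            · have he : (r:ℝ) = (((t - a t + 1:ℕ)):ℝ) := by
                rw [hrdef]; exact_mod_cast congrArg (Nat.cast (R := ℝ)) hmin
              rw [he]
              have : (0:ℝ) ≤ 1/(R:ℝ) := by positivity
              linarith
            · have he : (r:ℝ) = (R:ℝ) := by
                rw [hrdef]; exact_mod_cast congrArg (Nat.cast (R := ℝ)) hmin
              rw [he]
              have : (0:ℝ) ≤ 1/(((t - a t + 1:ℕ)):ℝ) := by positivity
              linarith
          calc σ^2/(r:ℝ) = σ^2 * (1/(r:ℝ)) := by ring
            _ ≤ σ^2 * (1/(((t - a t + 1:ℕ)):ℝ) + 1/(R:ℝ)) := by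
                apply mul_le_mul_of_nonneg_left h1 (by positivity)
        calc (θhat t - θ t)^2
            ≤ κ^2 * max ((∑ u ∈ Icc (t - r + 2) t, |θ u - θ (u-1)|)^2) (σ^2/(r:ℝ)) := hkk
          _ ≤ κ^2 * (σ^2/(r:ℝ)) := by
              apply mul_le_mul_of_nonneg_left hmaxb (by positivity)
          _ ≤ κ^2 * (σ^2*(1/(((t - a t + 1:ℕ)):ℝ) + 1/(R:ℝ))) := by
              apply mul_le_mul_of_nonneg_left hrsplit (by positivity)
          _ = κ^2*σ^2*(1/(((t - a t + 1:ℕ)):ℝ) + 1/(R:ℝ)) := by ring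
      -- block-count sum bound
      set K0 := Nat.floor (C/τ) with hK0def
      have hS1 : (∑ t ∈ Icc 1 n, (1:ℝ)/(((t - a t + 1:ℕ)):ℝ)) ≤ ((K0:ℝ)+1) * L := by
        have hinj : ∀ x ∈ Icc 1 n, ∀ y ∈ Icc 1 n,
            (fun s => (k s, s - a s + 1)) x = (fun s => (k s, s - a s + 1)) y → x = y := by
          intro x hx y hy hxy
          rw [mem_Icc] at hx hy
          simp only [Prod.mk.injEq] at hxy
          have hax : a x = a y := haeq x y hxy.1
          have h1 := hale x hx.1
          have h2 := hale y hy.1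
          have h3 := (hamem x hx.1).1
          have h4 := (hamem y hy.1).1
          omega
        calc (∑ t ∈ Icc 1 n, (1:ℝ)/(((t - a t + 1:ℕ)):ℝ))
            = ∑ p ∈ (Icc 1 n).image (fun s => (k s, s - a s + 1)), (1:ℝ)/(p.2:ℝ) := by
              rw [Finset.sum_image hinj]
          _ ≤ ∑ p ∈ (Icc 0 K0) ×ˢ (Icc 1 n), (1:ℝ)/(p.2:ℝ) := by
              apply Finset.sum_le_sum_of_subset_of_nonneg
              · intro p hp
                rw [Finset.mem_image] at hp
                obtain ⟨s, hs, rfl⟩ := hp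
                rw [mem_Icc] at hs
                rw [Finset.mem_product, mem_Icc, mem_Icc]
                refine ⟨⟨Nat.zero_le _, ?_⟩, ?_, ?_⟩
                · simp only [hkdef, hK0def]
                  exact Nat.floor_le_floor (by gcongr; exact hPC s hs.2)
                · have := hale s hs.1
                  have := (hamem s hs.1).1
                  omega
                · have := hale s hs.1
                  have := (hamem s hs.1).1
                  omega
              · intro p _ _
                positivity
          _ = ∑ x ∈ Icc 0 K0, ∑ y ∈ Icc 1 n, (1:ℝ)/(y:ℝ) := by rw [Finset.sum_product]
          _ = ((K0:ℝ)+1) * ∑ y ∈ Icc 1 n, (1:ℝ)/(y:ℝ) := by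
              rw [Finset.sum_const, Nat.card_Icc]
              simp [nsmul_eq_mul]
          _ ≤ ((K0:ℝ)+1) * L := by
              apply mul_le_mul_of_nonneg_left (harm n) (by positivity)
      -- numeric conclusion
      have hK0le : (K0:ℝ) ≤ C/τ := by
        simp only [hK0def]
        exact Nat.floor_le (by positivity)
      have hDpos : (0:ℝ) < D := by linarith
      have hDL2pos : (0:ℝ) < D * L^2 := by positivity
      have hq3 : ((2:ℝ)^((1:ℝ)/3))^(3:ℕ) = 2 := cube_rpow_third (by norm_num)
      have hl3' : (L^((1:ℝ)/3))^(3:ℕ) = L := cube_rpow_third hL0.le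
      have hg3' : ((D*L^2)^((1:ℝ)/3))^(3:ℕ) = D*L^2 := cube_rpow_third hDL2pos.le
      have hnum : ((K0:ℝ)+1)*L + (n:ℝ)/(R:ℝ) ≤ L * E :=
        numeric hσ hCpos hnR hL26 hD1.le hDdef hτ0 hτ3 hE0 hE3 (by positivity) hK0le
          hR0R hRlb (Real.rpow_pos_of_pos (by norm_num) _) hq3
          (Real.rpow_pos_of_pos hL0 _) hl3'
          (Real.rpow_pos_of_pos hDL2pos _) hg3'
      calc ∑ t ∈ Icc 1 n, (θhat t - θ t)^2
          ≤ ∑ t ∈ Icc 1 n, κ^2*σ^2*(1/(((t - a t + 1:ℕ)):ℝ) + 1/(R:ℝ)) :=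
            Finset.sum_le_sum hBt
        _ = κ^2*σ^2 * ((∑ t ∈ Icc 1 n, (1:ℝ)/(((t - a t + 1:ℕ)):ℝ)) + (n:ℝ)*(1/(R:ℝ))) := by
            rw [← Finset.mul_sum]
            congr 1
            rw [Finset.sum_add_distrib, Finset.sum_const, Nat.card_Icc]
            simp [nsmul_eq_mul]
        _ ≤ κ^2*σ^2 * (((K0:ℝ)+1)*L + (n:ℝ)/(R:ℝ)) := by
            apply mul_le_mul_of_nonneg_left _ (by positivity)
            have he : (n:ℝ)*(1/(R:ℝ)) = (n:ℝ)/(R:ℝ) := by ring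
            linarith
        _ ≤ κ^2*σ^2 * (L*E) := mul_le_mul_of_nonneg_left hnum (by positivity)
        _ = κ^2*σ^2*L*E := by ring
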